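/- For the serious-behavior utility U_S(p) = −p^w − h/(pdr(γ(p)))^v − D(x,p) with γ(p) = g·p/I, pdr(γ) = exp(a·γ^b), the second derivative of the middle term −h·exp(−v·a·(gp/I)^b) with respect to p equals (a·b·h·v·γ^b / (p²·pdr^v))·(−1 + b − a·b·v·γ^b), and under a < 0, b < 0, h > 0, v > 0 this expression is strictly negative. -/

import Mathlib

private lemma hasDerivAt_u (c b p : ℝ) (hc : 0 < c) (hp : 0 < p) :
    HasDerivAt (fun x : ℝ => (c * x) ^ b) (b * (c * p) ^ b / p) p := by
  have hcp : (0:ℝ) < c * p := mul_pos hc hp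
  have h1 := (Real.hasDerivAt_rpow_const (x := c * p) (p := b) (Or.inl hcp.ne')).comp p
    ((hasDerivAt_id p).const_mul c)
  convert h1 using 1
  case e'_4 => rfl
  case e'_5 => rfl
  case e'_8 => rfl
  rw [Real.rpow_sub_one hcp.ne']
  field_simp

private lemma step1 (a b c h v p : ℝ) (hc : 0 < c) (hp : 0 < p) :
    HasDerivAt (fun x : ℝ => -(h / (Real.exp (a * (c * x) ^ b)) ^ v))
      (a * b * h * v * ((c * p) ^ b / p * Real.exp (-(a * (c * p) ^ b * v)))) p := by
  have hu := hasDerivAt_u c b p hc hp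
  have he : HasDerivAt (fun x : ℝ => Real.exp (-(a * (c * x) ^ b * v)))
      (Real.exp (-(a * (c * p) ^ b * v)) * -(a * (b * (c * p) ^ b / p) * v)) p := by
    exact (((hu.const_mul a).mul_const v).neg).exp
  have hf : HasDerivAt (fun x : ℝ => -(h * Real.exp (-(a * (c * x) ^ b * v))))
      (-(h * (Real.exp (-(a * (c * p) ^ b * v)) * -(a * (b * (c * p) ^ b / p) * v)))) p :=
    (he.const_mul h).neg
  have hfun : (fun x : ℝ => -(h / (Real.exp (a * (c * x) ^ b)) ^ v))
      = fun x : ℝ => -(h * Real.exp (-(a * (c * x) ^ b * v))) := by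
    funext x
    rw [← Real.exp_mul, Real.exp_neg, div_eq_mul_inv]
  rw [hfun]
  convert hf using 1
  ring

private lemma step2 (a b c h v p : ℝ) (hc : 0 < c) (hp : 0 < p) :
    HasDerivAt (fun x : ℝ => a * b * h * v * ((c * x) ^ b / x * Real.exp (-(a * (c * x) ^ b * v))))
      ((a * b * h * v * (c * p) ^ b / (p ^ 2 * (Real.exp (a * (c * p) ^ b)) ^ v)) *
        (-1 + b - a * b * v * (c * p) ^ b)) p := by
  have hu := hasDerivAt_u c b p hc hp
  have hq : HasDerivAt (fun x : ℝ => (c * x) ^ b / x)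
      ((b * (c * p) ^ b / p * p - (c * p) ^ b * 1) / p ^ 2) p :=
    hu.div (hasDerivAt_id p) hp.ne'
  have he : HasDerivAt (fun x : ℝ => Real.exp (-(a * (c * x) ^ b * v)))
      (Real.exp (-(a * (c * p) ^ b * v)) * -(a * (b * (c * p) ^ b / p) * v)) p :=
    (((hu.const_mul a).mul_const v).neg).exp
  have h2 := ((hq.mul he).const_mul (a * b * h * v))
  convert h2 using 1
  case e'_4 => rfl
  case e'_5 => rfl
  case e'_8 => rfl
  rw [← Real.exp_mul, Real.exp_neg]
  have hE : Real.exp (a * (c * p) ^ b * v) ≠ 0 := Real.exp_ne_zero _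
  field_simp
  ring

/-- In the serious-behavior utility, the PDR penalty term `−h/(pdr(γ(p)))^v` with
`γ(p) = g·p/I`, `pdr(γ) = exp(a·γ^b)` has second derivative
`(a·b·h·v·γ^b / (p²·pdr^v))·(−1 + b − a·b·v·γ^b)`, which is strictly negative for
`a < 0`, `b < 0`, `h > 0`, `v > 0`. -/
theorem stmt14 (a b g I h v : ℝ) (ha : a < 0) (hb : b < 0) (hg : 0 < g) (hI : 0 < I)
    (hh : 0 < h) (hv : 0 < v) :
    ∀ p : ℝ, 0 < p →
      deriv (deriv (fun p : ℝ =>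
          -(h / (Real.exp (a * (g * p / I) ^ b)) ^ v))) p =
        (a * b * h * v * (g * p / I) ^ b /
            (p ^ 2 * (Real.exp (a * (g * p / I) ^ b)) ^ v)) *
          (-1 + b - a * b * v * (g * p / I) ^ b) ∧
      (a * b * h * v * (g * p / I) ^ b /
            (p ^ 2 * (Real.exp (a * (g * p / I) ^ b)) ^ v)) *
          (-1 + b - a * b * v * (g * p / I) ^ b) < 0 := by
  intro p hp
  set c := g / I with hc_def
  have hc : 0 < c := div_pos hg hI
  have harg : ∀ x : ℝ, g * x / I = c * x := fun x => by rw [hc_def]; ring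
  constructor
  · have hEq : deriv (fun x : ℝ => -(h / (Real.exp (a * (g * x / I) ^ b)) ^ v))
        =ᶠ[nhds p] (fun x : ℝ =>
          a * b * h * v * ((c * x) ^ b / x * Real.exp (-(a * (c * x) ^ b * v)))) := by
      filter_upwards [eventually_gt_nhds hp] with x hx
      have hfun : (fun y : ℝ => -(h / (Real.exp (a * (g * y / I) ^ b)) ^ v))
          = fun y : ℝ => -(h / (Real.exp (a * (c * y) ^ b)) ^ v) := by
        funext y; rw [harg y]
      rw [hfun]
      exact (step1 a b c h v x hc hx).deriv
    rw [hEq.deriv_eq]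
    rw [harg p]
    exact (step2 a b c h v p hc hp).deriv
  · rw [harg p]
    have hu : 0 < (c * p) ^ b := Real.rpow_pos_of_pos (mul_pos hc hp) b
    have hab : 0 < a * b := mul_pos_of_neg_of_neg ha hb
    have h1 : 0 < a * b * h * v * (c * p) ^ b /
        (p ^ 2 * (Real.exp (a * (c * p) ^ b)) ^ v) := by
      apply div_pos
      · positivity
      · positivity
    have h2 : -1 + b - a * b * v * (c * p) ^ b < 0 := by
      have : 0 < a * b * v * (c * p) ^ b := by positivity
      linarith
    exact mul_neg_of_pos_of_neg h1 h2
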